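/- For all v, w ∈ ℝ and every locally Lipschitz function Ψ : ℝ → ℝ, if Ψ' : ℝ → ℝ is a function such that Ψ has derivative Ψ'(λ) at almost every λ ∈ ℝ, then ∫_ℝ Ψ'(λ)·|χ(λ; v) − χ(λ; w)| dλ = sgn(v − w)·(Ψ(v) − Ψ(w)). -/

import Mathlib

open MeasureTheory Set Filter Topology Metric

/-- The `χ`-function: `χ(λ; v) = 1` if `0 < λ < v`, `= -1` if `v < λ < 0`, `= 0` otherwise. -/
noncomputable def chi (l v : ℝ) : ℝ :=
  if 0 < l ∧ l < v then 1 else if v < l ∧ l < 0 then -1 else 0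
open MeasureTheory Set Filter Topology Metric

lemma uniform_loc_lip (Ψ : ℝ → ℝ) (hLip : LocallyLipschitz Ψ) (a b : ℝ) (hab : a ≤ b) :
    ∃ K : ℝ, ∃ δ : ℝ, 0 < δ ∧
      ∀ x ∈ Icc a b, ∀ y : ℝ, dist y x ≤ δ → |Ψ y - Ψ x| ≤ K * dist y x := by
  choose Kf t htm hK using hLip
  have hball : ∀ x : ℝ, ∃ ε : ℝ, 0 < ε ∧ ball x (2 * ε) ⊆ t x := by
    intro x
    obtain ⟨r, hr, hsub⟩ := Metric.mem_nhds_iff.mp (htm x)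
    exact ⟨r / 2, by linarith, by rw [show 2 * (r/2) = r by ring]; exact hsub⟩
  choose ε hε hsub using hball
  obtain ⟨F, hFs, hFcov⟩ := (isCompact_Icc : IsCompact (Icc a b)).elim_nhds_subcover
    (fun x => ball x (ε x)) (fun x _ => ball_mem_nhds x (hε x))
  have hFne : F.Nonempty := by
    have ha : (a : ℝ) ∈ Icc a b := ⟨le_refl _, hab⟩
    obtain ⟨i, hi, _⟩ := Set.mem_iUnion₂.mp (hFcov ha)
    exact ⟨i, hi⟩
  refine ⟨F.sup' hFne (fun x => (Kf x : ℝ)), F.inf' hFne ε, ?_, ?_⟩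
  · obtain ⟨i, hi, hieq⟩ := F.exists_mem_eq_inf' hFne ε
    rw [hieq]; exact hε i
  · intro x hx y hy
    obtain ⟨i, hi, hxi⟩ := Set.mem_iUnion₂.mp (hFcov hx)
    have hδi : F.inf' hFne ε ≤ ε i := Finset.inf'_le _ hi
    have hxball : x ∈ ball i (2 * ε i) := by
      simp only [mem_ball] at hxi ⊢; linarith [hε i]
    have hyball : y ∈ ball i (2 * ε i) := by
      simp only [mem_ball] at hxi ⊢
      calc dist y i ≤ dist y x + dist x i := dist_triangle _ _ _
        _ < F.inf' hFne ε + ε i := by linarith [hy, hxi]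
        _ ≤ 2 * ε i := by linarith
    have := (hK i).dist_le_mul y (hsub i hyball) x (hsub i hxball)
    rw [Real.dist_eq] at this
    calc |Ψ y - Ψ x| ≤ (Kf i : ℝ) * dist y x := this
      _ ≤ F.sup' hFne (fun x => (Kf x : ℝ)) * dist y x :=
        mul_le_mul_of_nonneg_right (Finset.le_sup' (fun x => (Kf x : ℝ)) hi) dist_nonneg
open MeasureTheory Set Filter Topology Metric

lemma slope_seq_tendsto {f : ℝ → ℝ} {c d : ℝ} (hf : HasDerivAt f d c) {δ : ℝ} (hδ : 0 < δ) :
    Tendsto (fun n : ℕ => (f (c + δ / (n + 1)) - f c) / (δ / (n + 1))) atTop (𝓝 d) := by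
  have h0 : Tendsto (fun n : ℕ => δ / ((n : ℝ) + 1)) atTop (𝓝 0) :=
    Tendsto.div_atTop tendsto_const_nhds
      (tendsto_atTop_add_const_right _ 1 tendsto_natCast_atTop_atTop)
  have h1 : Tendsto (fun n : ℕ => c + δ / ((n : ℝ) + 1)) atTop (𝓝[≠] c) := by
    apply tendsto_nhdsWithin_of_tendsto_nhds_of_eventually_within
    · simpa using tendsto_const_nhds.add h0
    · filter_upwards with n
      have h2 : 0 < δ / ((n : ℝ) + 1) := by positivity
      simp only [Set.mem_compl_iff, Set.mem_singleton_iff]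
      intro h3
      nlinarith [h2, h3]
  have h4 := (hasDerivAt_iff_tendsto_slope.mp hf).comp h1
  refine Tendsto.congr (fun n => ?_) h4
  have h2 : (0:ℝ) < δ / ((n : ℝ) + 1) := by positivity
  simp [Function.comp, slope_def_field, div_eq_div_iff]


lemma ftc_ae (Ψ Ψ' : ℝ → ℝ) (hLip : LocallyLipschitz Ψ)
    (hderiv : ∀ᵐ l : ℝ ∂volume, HasDerivAt Ψ (Ψ' l) l) (a b : ℝ) (hab : a ≤ b) :
    ∫ x in Set.Ioc a b, Ψ' x = Ψ b - Ψ a := by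
  have hcont : Continuous Ψ := hLip.continuous
  obtain ⟨K, δ, hδ, hK⟩ := uniform_loc_lip Ψ hLip a b hab
  set h : ℕ → ℝ := fun n => δ / ((n : ℝ) + 1) with hh
  have hhpos : ∀ n, 0 < h n := fun n => by positivity
  have hhle : ∀ n, h n ≤ δ := by
    intro n
    rw [hh]
    rw [div_le_iff₀ (by positivity)]
    nlinarith [Nat.cast_nonneg (α := ℝ) n, hδ]
  set g : ℕ → ℝ → ℝ := fun n x => (Ψ (x + h n) - Ψ x) / h n with hg
  have hgcont : ∀ n, Continuous (g n) :=
    fun n => ((hcont.comp (continuous_id.add continuous_const)).sub hcont).div_const _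
  -- a.e. pointwise convergence
  have hconv : ∀ᵐ x : ℝ ∂volume, Tendsto (fun n => g n x) atTop (𝓝 (Ψ' x)) := by
    filter_upwards [hderiv] with x hx
    exact slope_seq_tendsto hx hδ
  -- measurability of Ψ'
  have hmeas : AEStronglyMeasurable Ψ' (volume : Measure ℝ) :=
    aestronglyMeasurable_of_tendsto_ae atTop (fun n => (hgcont n).aestronglyMeasurable) hconv
  -- bound
  have hbound : ∀ n, ∀ x ∈ Set.Ioc a b, |g n x| ≤ K := by
    intro n x hx
    have hx' : x ∈ Icc a b := Ioc_subset_Icc_self hx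
    have hd : dist (x + h n) x = h n := by
      rw [Real.dist_eq]; rw [add_sub_cancel_left]; exact abs_of_pos (hhpos n)
    have := hK x hx' (x + h n) (by rw [hd]; exact hhle n)
    rw [hd] at this
    rw [hg]
    rw [abs_div, abs_of_pos (hhpos n), div_le_iff₀ (hhpos n)]
    simpa using this
  -- DCT
  have hDCT : Tendsto (fun n => ∫ x in Set.Ioc a b, g n x) atTop
      (𝓝 (∫ x in Set.Ioc a b, Ψ' x)) := by
    refine tendsto_integral_of_dominated_convergence (fun _ => K) ?_ ?_ ?_ ?_
    · exact fun n => (hgcont n).aestronglyMeasurable.restrict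
    · exact (integrableOn_const_iff (by simp)).mpr (Or.inr measure_Ioc_lt_top)
    · intro n
      refine (ae_restrict_iff' measurableSet_Ioc).mpr ?_
      filter_upwards with x hx
      simpa [Real.norm_eq_abs] using hbound n x hx
    · exact ae_restrict_of_ae hconv
  -- interval integral computation
  have hInt : ∀ n, ∫ x in Set.Ioc a b, g n x =
      ((∫ x in b..(b + h n), Ψ x) - ∫ x in a..(a + h n), Ψ x) / h n := by
    intro n
    have hii : ∀ c d : ℝ, IntervalIntegrable Ψ volume c d :=
      fun c d => hcont.intervalIntegrable c d
    rw [← intervalIntegral.integral_of_le hab]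
    have e1 : ∫ x in a..b, g n x = ((∫ x in a..b, Ψ (x + h n)) - ∫ x in a..b, Ψ x) / h n := by
      rw [hg]
      simp only
      rw [intervalIntegral.integral_div]
      congr 1
      exact intervalIntegral.integral_sub ((hcont.comp (continuous_id.add continuous_const)).intervalIntegrable _ _) (hii a b)
    rw [e1]
    congr 1
    rw [intervalIntegral.integral_comp_add_right]
    have e2 : ∫ x in (a + h n)..(b + h n), Ψ x =
        (∫ x in (a + h n)..b, Ψ x) + ∫ x in b..(b + h n), Ψ x :=
      (intervalIntegral.integral_add_adjacent_intervals (hii _ _) (hii _ _)).symm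
    have e3 : ∫ x in a..b, Ψ x = (∫ x in a..(a + h n), Ψ x) + ∫ x in (a + h n)..b, Ψ x :=
      (intervalIntegral.integral_add_adjacent_intervals (hii _ _) (hii _ _)).symm
    rw [e2, e3]; ring
  -- limit of endpoint averages
  have hend : ∀ c : ℝ, Tendsto (fun n => (∫ x in c..(c + h n), Ψ x) / h n) atTop (𝓝 (Ψ c)) := by
    intro c
    have hF : HasDerivAt (fun u => ∫ x in c..u, Ψ x) (Ψ c) c :=
      intervalIntegral.integral_hasDerivAt_right (hcont.intervalIntegrable c c)
        hcont.aestronglyMeasurable.stronglyMeasurableAtFilter hcont.continuousAt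
    have := slope_seq_tendsto hF hδ
    simpa using this
  have hlim : Tendsto (fun n => ∫ x in Set.Ioc a b, g n x) atTop (𝓝 (Ψ b - Ψ a)) := by
    have := (hend b).sub (hend a)
    refine Tendsto.congr (fun n => ?_) this
    rw [hInt n]; ring
  exact tendsto_nhds_unique hDCT hlim

lemma chi_of_pos {l : ℝ} (v : ℝ) (h : 0 < l) : chi l v = if l < v then 1 else 0 := by
  by_cases hlv : l < v
  · rw [chi, if_pos ⟨h, hlv⟩, if_pos hlv]
  · rw [chi, if_neg (fun c => hlv c.2), if_neg (fun c => absurd h (not_lt.mpr c.2.le)),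
      if_neg hlv]

lemma chi_of_neg {l : ℝ} (v : ℝ) (h : l < 0) : chi l v = if v < l then -1 else 0 := by
  by_cases hvl : v < l
  · rw [chi, if_neg (fun c => absurd h (not_lt.mpr c.1.le)), if_pos ⟨hvl, h⟩, if_pos hvl]
  · rw [chi, if_neg (fun c => absurd h (not_lt.mpr c.1.le)), if_neg (fun c => hvl c.1),
      if_neg hvl]

lemma chi_abs (v w : ℝ) (hvw : w < v) (l : ℝ) (h0 : l ≠ 0) (hv : l ≠ v) (hw : l ≠ w) :
    |chi l v - chi l w| = if l ∈ Set.Ioc w v then (1:ℝ) else 0 := by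
  have hIoc : (if l ∈ Set.Ioc w v then (1:ℝ) else 0) = if w < l ∧ l < v then (1:ℝ) else 0 := by
    refine if_congr ?_ rfl rfl
    simp only [Set.mem_Ioc]
    constructor
    · rintro ⟨h1, h2⟩; exact ⟨h1, lt_of_le_of_ne h2 hv⟩
    · rintro ⟨h1, h2⟩; exact ⟨h1, le_of_lt h2⟩
  rw [hIoc]
  rcases lt_or_gt_of_ne h0 with h | h
  · rw [chi_of_neg v h, chi_of_neg w h]
    rcases lt_or_gt_of_ne hv with hv' | hv' <;> rcases lt_or_gt_of_ne hw with hw' | hw' <;>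
      split_ifs <;>
      first
        | linarith
        | (exfalso; obtain ⟨c1, c2⟩ := ‹_ ∧ _›; linarith)
        | (exact absurd ⟨by linarith, by linarith⟩ ‹¬(_ ∧ _)›)
        | norm_num
  · rw [chi_of_pos v h, chi_of_pos w h]
    rcases lt_or_gt_of_ne hv with hv' | hv' <;> rcases lt_or_gt_of_ne hw with hw' | hw' <;>
      split_ifs <;>
      first
        | linarith
        | (exfalso; obtain ⟨c1, c2⟩ := ‹_ ∧ _›; linarith)
        | (exact absurd ⟨by linarith, by linarith⟩ ‹¬(_ ∧ _)›)
        | norm_num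

lemma main_aux (v w : ℝ) (hvw : w < v) (Ψ Ψ' : ℝ → ℝ) (hLip : LocallyLipschitz Ψ)
    (hderiv : ∀ᵐ l : ℝ ∂volume, HasDerivAt Ψ (Ψ' l) l) :
    ∫ l : ℝ, Ψ' l * |chi l v - chi l w| = Ψ v - Ψ w := by
  have hne : ∀ c : ℝ, ∀ᵐ l : ℝ ∂(volume : Measure ℝ), l ≠ c := fun c => by
    rw [ae_iff]
    simp only [not_not, Set.setOf_eq_eq_singleton]
    exact measure_singleton c
  have hae : (fun l => Ψ' l * |chi l v - chi l w|) =ᵐ[volume] (Set.Ioc w v).indicator Ψ' := by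
    filter_upwards [hne 0, hne v, hne w] with l h1 h2 h3
    rw [chi_abs v w hvw l h1 h2 h3, Set.indicator_apply]
    split_ifs <;> simp
  rw [integral_congr_ae hae, integral_indicator measurableSet_Ioc]
  exact ftc_ae Ψ Ψ' hLip hderiv w v hvw.le

/-- Lemma 3.1(ii), general form: for a locally Lipschitz `Ψ` with a.e. derivative `Ψ'`,
`∫ Ψ'(λ) |χ(λ; v) - χ(λ; w)| dλ = sgn(v - w) (Ψ(v) - Ψ(w))`. -/
theorem integral_deriv_mul_abs_chi_sub (v w : ℝ) (Ψ Ψ' : ℝ → ℝ)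
    (hLip : LocallyLipschitz Ψ)
    (hderiv : ∀ᵐ l : ℝ ∂volume, HasDerivAt Ψ (Ψ' l) l) :
    ∫ l : ℝ, Ψ' l * |chi l v - chi l w| = Real.sign (v - w) * (Ψ v - Ψ w) := by
  rcases lt_trichotomy v w with hvw | hvw | hvw
  · have key := main_aux w v hvw Ψ Ψ' hLip hderiv
    have habs : (fun l : ℝ => Ψ' l * |chi l v - chi l w|)
        = fun l : ℝ => Ψ' l * |chi l w - chi l v| := by
      funext l; rw [abs_sub_comm]
    rw [habs, key, Real.sign_of_neg (by linarith)]
    ring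
  · subst hvw
    simp [Real.sign_zero]
  · rw [main_aux v w hvw Ψ Ψ' hLip hderiv, Real.sign_of_pos (by linarith), one_mul]
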